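/- Let r, b be positive integers and let θ be a root of the irreducible trinomial P(X) = X³ + 3rbX − b ∈ ℤ[X]. Then the element ε = 1 − 3rθ has minimal polynomial M_ε(X) = X³ − 3X² + 3(9r³b + 1)X − 1 over ℚ; in particular ε³ − 3ε² + 3(9r³b + 1)ε − 1 = 0 and N_{L/ℚ}(ε) = 1, where L = ℚ(θ). -/

import Mathlib

open NumberField Polynomial

/-- Let `r, b ≥ 1` and let `θ` be a root of the irreducible trinomial
`P(X) = X³ + 3rbX − b ∈ ℤ[X]` generating `L = ℚ(θ)`. Then `ε = 1 − 3rθ` has minimal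
polynomial `X³ − 3X² + 3(9r³b + 1)X − 1` over `ℚ`; in particular
`ε³ − 3ε² + 3(9r³b + 1)ε − 1 = 0` and `N_{L/ℚ}(ε) = 1`. -/
theorem cubic_trinomial_unit_minimal_polynomial
    (r b : ℤ) (hr : 0 < r) (hb : 0 < b)
    (L : Type*) [Field L] [NumberField L] (θ : L)
    (hroot : θ ^ 3 + ((3 * r * b : ℤ) : L) * θ - (b : L) = 0)
    (hirr : Irreducible
      ((X ^ 3 + C (3 * r * b) * X - C b : Polynomial ℤ).map (Int.castRingHom ℚ)))
    (hgen : IntermediateField.adjoin ℚ {θ} = ⊤) :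
    minpoly ℚ (1 - ((3 * r : ℤ) : L) * θ) =
      X ^ 3 - 3 * X ^ 2 + C ((3 * (9 * r ^ 3 * b + 1) : ℤ) : ℚ) * X - 1 ∧
    (1 - ((3 * r : ℤ) : L) * θ) ^ 3 - 3 * (1 - ((3 * r : ℤ) : L) * θ) ^ 2
      + ((3 * (9 * r ^ 3 * b + 1) : ℤ) : L) * (1 - ((3 * r : ℤ) : L) * θ) - 1 = 0 ∧
    Algebra.norm ℚ (1 - ((3 * r : ℤ) : L) * θ) = 1 := by
  set ε : L := 1 - ((3 * r : ℤ) : L) * θ with hε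
  have hroot' : θ ^ 3 + (3 * (r : L) * (b : L)) * θ - (b : L) = 0 := by
    push_cast at hroot; linear_combination hroot
  -- the algebraic relation for ε
  have heq : ε ^ 3 - 3 * ε ^ 2 + ((3 * (9 * r ^ 3 * b + 1) : ℤ) : L) * ε - 1 = 0 := by
    rw [hε]; push_cast
    linear_combination (-27 * (r : L) ^ 3) * hroot'
  -- the target polynomial M
  set M : Polynomial ℚ := X ^ 3 - 3 * X ^ 2 + C ((3 * (9 * r ^ 3 * b + 1) : ℤ) : ℚ) * X - 1
    with hM
  have haevalM : aeval ε M = 0 := by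
    rw [hM]
    push_cast at heq
    simp only [map_sub, map_add, map_mul, map_pow, aeval_X, aeval_C, map_one, map_ofNat,
      map_intCast]
    push_cast
    linear_combination heq
  have hMmonic : M.Monic := by rw [hM]; monicity!
  have hMdeg : M.natDegree = 3 := by rw [hM]; compute_degree!
  -- minpoly of θ
  set P : Polynomial ℚ := (X ^ 3 + C (3 * r * b) * X - C b : Polynomial ℤ).map
    (Int.castRingHom ℚ) with hP
  have hPmonic : P.Monic := by
    apply Polynomial.Monic.map
    monicity!
  have haevalP : aeval θ P = 0 := by
    rw [hP, ← algebraMap_int_eq, aeval_map_algebraMap]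
    simp only [map_sub, map_add, map_mul, map_pow, aeval_X, aeval_C, algebraMap_int_eq,
      eq_intCast, map_intCast, map_ofNat]
    push_cast
    linear_combination hroot'
  have hminθ : minpoly ℚ θ = P := (minpoly.eq_of_irreducible_of_monic hirr haevalP hPmonic).symm
  have hintθ : IsIntegral ℚ θ := ⟨P, hPmonic, by exact haevalP⟩
  have hPdeg : P.natDegree = 3 := by
    rw [hP, (show ((X ^ 3 + C (3 * r * b) * X - C b : Polynomial ℤ)).Monic by
      monicity!).natDegree_map]
    compute_degree!
  have hfinL : Module.finrank ℚ L = 3 := by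
    rw [← IntermediateField.finrank_top', ← hgen, IntermediateField.adjoin.finrank hintθ,
      hminθ, hPdeg]
  -- ε generates L
  have hintε : IsIntegral ℚ ε := IsIntegral.of_finite ℚ ε
  have h3r : ((3 * r : ℤ) : L) ≠ 0 := by
    rw [Int.cast_ne_zero]; positivity
  have hgenε : IntermediateField.adjoin ℚ {ε} = ⊤ := by
    rw [eq_top_iff, ← hgen, IntermediateField.adjoin_le_iff]
    intro x hx
    rw [Set.mem_singleton_iff] at hx
    rw [hx]
    have hεmem : ε ∈ IntermediateField.adjoin ℚ {ε} :=
      IntermediateField.mem_adjoin_simple_self ℚ ε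
    have hθeq : θ = (algebraMap ℚ L (((3 * r : ℤ) : ℚ)))⁻¹ * (1 - ε) := by
      rw [hε, map_intCast]
      push_cast
      field_simp
      exact (eq_div_iff (by push_cast at h3r; exact right_ne_zero_of_mul h3r)).mpr (by ring)
    rw [hθeq]
    exact mul_mem (inv_mem (IntermediateField.algebraMap_mem _ _)) (sub_mem (one_mem _) hεmem)
  have hdegε : (minpoly ℚ ε).natDegree = 3 := by
    rw [← IntermediateField.adjoin.finrank hintε, hgenε, IntermediateField.finrank_top', hfinL]
  -- minpoly = M
  have hdvd : minpoly ℚ ε ∣ M := minpoly.dvd ℚ ε haevalM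
  have hmin : minpoly ℚ ε = M := by
    obtain ⟨q, hq⟩ := hdvd
    have hM0 : M ≠ 0 := hMmonic.ne_zero
    have hq0 : q ≠ 0 := by rintro rfl; simp at hq; exact hM0 (by rw [hq])
    have hmp0 : minpoly ℚ ε ≠ 0 := minpoly.ne_zero hintε
    have hdeg : M.natDegree = (minpoly ℚ ε).natDegree + q.natDegree := by
      rw [hq, Polynomial.natDegree_mul hmp0 hq0]
    have hqdeg : q.natDegree = 0 := by omega
    have hqmonic : q.Monic := by
      have := hMmonic
      rw [hq] at this
      exact (minpoly.monic hintε).of_mul_monic_left this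
    have : q = 1 := Polynomial.eq_one_of_monic_natDegree_zero hqmonic hqdeg
    rw [hq, this, mul_one]
  refine ⟨hmin, heq, ?_⟩
  -- norm via power basis
  have hcoeff0 : (minpoly ℚ ε).coeff 0 = -1 := by
    rw [hmin, hM]
    simp
  let pb0 : PowerBasis ℚ (IntermediateField.adjoin ℚ {ε}) :=
    IntermediateField.adjoin.powerBasis hintε
  let e : (IntermediateField.adjoin ℚ {ε}) ≃ₐ[ℚ] L :=
    (IntermediateField.equivOfEq hgenε).trans IntermediateField.topEquiv
  let pb : PowerBasis ℚ L := pb0.map e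
  have hgenpb : pb.gen = ε := rfl
  have hdim : pb.dim = 3 := by
    have : pb0.dim = 3 := by
      rw [IntermediateField.adjoin.powerBasis_dim, hdegε]
    simpa [pb, PowerBasis.map] using this
  have := Algebra.PowerBasis.norm_gen_eq_coeff_zero_minpoly pb
  rw [hgenpb, hdim, hcoeff0] at this
  rw [this]
  norm_num
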